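/- If G is a graph with vertex set V(G) = Ω such that the family of all r-element subsets of Ω is a domination completion realized by G (i.e., D(G) = H with H a hypergraph on Ω), then the transversal hypergraph tr(D(G)) equals the family of minimal closed neighborhoods of G; in particular |tr(D(G))| ≤ |Ω|. -/

import Mathlib

def IsDominating {V : Type*} (G : SimpleGraph V) (D : Set V) : Prop :=
  ∀ v ∉ D, ∃ u ∈ D, G.Adj u v

def IsMinDominating {V : Type*} (G : SimpleGraph V) (D : Set V) : Prop :=
  IsDominating G D ∧ ∀ D' ⊂ D, ¬ IsDominating G D'

/-- The transversal of a family `H` of subsets of `V`: inclusion-minimal sets meeting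
every member of `H`. -/
def transversal {V : Type*} (H : Set (Set V)) : Set (Set V) :=
  {X | (∀ A ∈ H, (X ∩ A).Nonempty) ∧ ∀ Y ⊂ X, ¬ ∀ A ∈ H, (Y ∩ A).Nonempty}

lemma closedNbhd_inter {V : Type*} (G : SimpleGraph V) (v : V) {D : Set V}
    (hD : IsDominating G D) : ((insert v (G.neighborSet v)) ∩ D).Nonempty := by
  by_cases hv : v ∈ D
  · exact ⟨v, Set.mem_insert _ _, hv⟩
  · obtain ⟨u, huD, hadj⟩ := hD v hv
    exact ⟨u, Set.mem_insert_of_mem _ hadj.symm, huD⟩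

lemma exists_minDominating_subset {V : Type*} [Fintype V] (G : SimpleGraph V) {D : Set V}
    (hD : IsDominating G D) : ∃ D' ⊆ D, IsMinDominating G D' := by
  classical
  have hfin : ({D' : Set V | D' ⊆ D ∧ IsDominating G D'}).Finite := Set.toFinite _
  obtain ⟨a, ha, hmin⟩ := Set.Finite.exists_minimalFor id _ hfin ⟨D, subset_rfl, hD⟩
  refine ⟨a, ha.1, ha.2, fun D' hss hdom => ?_⟩
  have := hmin (j := D') ⟨hss.subset.trans ha.1, hdom⟩ hss.le
  exact hss.ne (le_antisymm hss.subset this)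

lemma exists_closedNbhd_subset {V : Type*} [Fintype V] (G : SimpleGraph V) {Y : Set V}
    (hY : ∀ D, IsMinDominating G D → (Y ∩ D).Nonempty) :
    ∃ v, insert v (G.neighborSet v) ⊆ Y := by
  by_contra h
  push_neg at h
  have hdom : IsDominating G Yᶜ := by
    intro v hv
    simp only [Set.mem_compl_iff, not_not] at hv
    obtain ⟨u, huN, huY⟩ := Set.not_subset.mp (h v)
    have hne : u ≠ v := fun he => huY (he ▸ hv)
    rcases huN with he | hadj
    · exact absurd he hne
    · exact ⟨u, huY, hadj.symm⟩
  obtain ⟨D', hsub, hmin⟩ := exists_minDominating_subset G hdom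
  obtain ⟨x, hxY, hxD⟩ := hY D' hmin
  exact (hsub hxD) hxY

/-- For any graph `G`, the transversal of the family of minimal dominating sets equals the
family of inclusion-minimal closed neighborhoods of `G`; in particular its cardinality is
at most the number of vertices. -/
theorem transversal_minDominating_eq_minimal_neighborhoods {V : Type*} [Fintype V]
    (G : SimpleGraph V) :
    transversal {D : Set V | IsMinDominating G D}
        = {s : Set V | (∃ v : V, s = insert v (G.neighborSet v)) ∧
            ∀ w : V, insert w (G.neighborSet w) ⊆ s → insert w (G.neighborSet w) = s} ∧
      (transversal {D : Set V | IsMinDominating G D}).ncard ≤ Fintype.card V := by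
  classical
  have heq : transversal {D : Set V | IsMinDominating G D}
      = {s : Set V | (∃ v : V, s = insert v (G.neighborSet v)) ∧
          ∀ w : V, insert w (G.neighborSet w) ⊆ s → insert w (G.neighborSet w) = s} := by
    ext X
    constructor
    · rintro ⟨hhit, hmin⟩
      have hhit' : ∀ D, IsMinDominating G D → (X ∩ D).Nonempty := fun D hD => hhit D hD
      obtain ⟨v, hv⟩ := exists_closedNbhd_subset G hhit'
      have hNhits : ∀ A ∈ {D : Set V | IsMinDominating G D},
          ((insert v (G.neighborSet v)) ∩ A).Nonempty := fun A hA => closedNbhd_inter G v hA.1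
      have hXv : X = insert v (G.neighborSet v) := by
        by_contra hne
        exact hmin _ (hv.ssubset_of_ne (Ne.symm hne)) hNhits
      refine ⟨⟨v, hXv⟩, fun w hw => ?_⟩
      by_contra hne
      have hNw : ∀ A ∈ {D : Set V | IsMinDominating G D},
          ((insert w (G.neighborSet w)) ∩ A).Nonempty := fun A hA => closedNbhd_inter G w hA.1
      exact hmin _ (hw.ssubset_of_ne hne) hNw
    · rintro ⟨⟨v, rfl⟩, hminN⟩
      refine ⟨fun A hA => closedNbhd_inter G v hA.1, fun Y hss hYhit => ?_⟩
      obtain ⟨w, hw⟩ := exists_closedNbhd_subset G (fun D hD => hYhit D hD)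
      have := hminN w (hw.trans hss.subset)
      exact hss.not_subset (this ▸ hw)
  refine ⟨heq, ?_⟩
  have hsub : transversal {D : Set V | IsMinDominating G D}
      ⊆ Set.range (fun v : V => insert v (G.neighborSet v)) := by
    rw [heq]
    rintro X ⟨⟨v, rfl⟩, -⟩
    exact ⟨v, rfl⟩
  calc (transversal {D : Set V | IsMinDominating G D}).ncard
      ≤ (Set.range (fun v : V => insert v (G.neighborSet v))).ncard :=
        Set.ncard_le_ncard hsub (Set.toFinite _)
    _ = ((fun v : V => insert v (G.neighborSet v)) '' Set.univ).ncard := by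
        rw [Set.image_univ]
    _ ≤ (Set.univ : Set V).ncard := Set.ncard_image_le (Set.toFinite _)
    _ = Fintype.card V := by rw [Set.ncard_univ, Nat.card_eq_fintype_card]
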